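/- The power series y(z) = Σ_{n≥0} (α/2)_n (β/2)_n / (n! ((γ+1)/2)_n) · z^{2n} converges for |z| < 1 and satisfies the differential equation y'' + (γ/z + δ/(z-1) + δ/(z+1)) y' + αβ/((z-1)(z+1)) y = 0 on the punctured disc {z : 0 < |z| < 1}, where δ = (α+β+1-γ)/2. -/

import Mathlib

open Finset Nat

/-- The Taylor coefficients `(α/2)_n (β/2)_n / (n! ((γ+1)/2)_n)` of the local Heun
function `Hl(-1,0;α,β,γ,δ;·)`. -/
noncomputable def heunCoeff (α β γ : ℂ) (n : ℕ) : ℂ :=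
  (∏ i ∈ Finset.range n, (α / 2 + (i : ℂ))) * (∏ i ∈ Finset.range n, (β / 2 + (i : ℂ))) /
    ((n ! : ℂ) * ∏ i ∈ Finset.range n, ((γ + 1) / 2 + (i : ℂ)))

/-- The series `y(z) = Σ (α/2)_n (β/2)_n / (n! ((γ+1)/2)_n) z^{2n}`. -/
noncomputable def heunSeries (α β γ : ℂ) (z : ℂ) : ℂ :=
  ∑' n : ℕ, heunCoeff α β γ n * z ^ (2 * n)

namespace HeunAux

open Filter Metric Topology

variable {α β γ : ℂ}

lemma den_ne (hγ : ∀ m : ℕ, γ ≠ -(m : ℂ)) (i : ℕ) : (γ + 1) / 2 + (i : ℂ) ≠ 0 := by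
  intro h
  apply hγ (2 * i + 1)
  push_cast
  linear_combination 2 * h

lemma prod_den_ne (hγ : ∀ m : ℕ, γ ≠ -(m : ℂ)) (n : ℕ) :
    (∏ i ∈ Finset.range n, ((γ + 1) / 2 + (i : ℂ))) ≠ 0 :=
  Finset.prod_ne_zero_iff.2 fun i _ => den_ne hγ i

lemma coeff_succ (hγ : ∀ m : ℕ, γ ≠ -(m : ℂ)) (n : ℕ) :
    heunCoeff α β γ (n + 1) = heunCoeff α β γ n *
      ((α / 2 + n) * (β / 2 + n) / (((n : ℂ) + 1) * ((γ + 1) / 2 + n))) := by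
  unfold heunCoeff
  rw [Finset.prod_range_succ, Finset.prod_range_succ, Finset.prod_range_succ,
    Nat.factorial_succ]
  push_cast
  rw [div_mul_div_comm ((∏ x ∈ Finset.range n, (α / 2 + (x:ℂ))) *
    ∏ x ∈ Finset.range n, (β / 2 + (x:ℂ)))]
  congr 1 <;> ring

lemma coeff_rec (hγ : ∀ m : ℕ, γ ≠ -(m : ℂ)) (n : ℕ) :
    (2 * (n : ℂ) + 2) * (2 * n + 1 + γ) * heunCoeff α β γ (n + 1)
      = (2 * n + α) * (2 * n + β) * heunCoeff α β γ n := by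
  rw [coeff_succ hγ]
  have h3 : ((n : ℂ) + 1) ≠ 0 := by exact_mod_cast Nat.cast_add_one_ne_zero (R := ℂ) n
  have h4 : ((γ + 1) / 2 + (n : ℂ)) ≠ 0 := den_ne hγ n
  have h5 : ((n : ℂ) + 1) * ((γ + 1) / 2 + (n : ℂ)) ≠ 0 := mul_ne_zero h3 h4
  linear_combination (4 * heunCoeff α β γ n * (α / 2 + n) * (β / 2 + n)) * div_self h5

lemma tendsto_cratio (a b : ℂ) :
    Tendsto (fun n : ℕ => (a + n) / (b + n)) atTop (𝓝 1) := by
  have h0 : Tendsto (fun n : ℕ => (a + n) / (b + n) - 1) atTop (𝓝 0) := by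
    apply squeeze_zero_norm' (a := fun n : ℕ => ‖a - b‖ / ((n : ℝ) - ‖b‖))
    · filter_upwards [eventually_gt_atTop ⌈‖b‖⌉₊] with n hn
      have hbn : ‖b‖ < (n : ℝ) := lt_of_le_of_lt (Nat.le_ceil _) (by exact_mod_cast hn)
      have hpos : (0:ℝ) < (n : ℝ) - ‖b‖ := by linarith
      have hnn : ‖(n : ℂ)‖ = (n : ℝ) := by simp
      have hne : b + (n : ℂ) ≠ 0 := by
        intro h
        have hb : b = -(n : ℂ) := by linear_combination h
        rw [hb] at hbn
        simp at hbn
      have hge : (n : ℝ) - ‖b‖ ≤ ‖b + (n : ℂ)‖ := by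
        have h1 : ‖(n : ℂ)‖ ≤ ‖b + (n:ℂ)‖ + ‖b‖ := by
          calc ‖(n : ℂ)‖ = ‖(b + (n:ℂ)) + (-b)‖ := by congr 1; ring
          _ ≤ ‖b + (n:ℂ)‖ + ‖(-b)‖ := norm_add_le _ _
          _ = ‖b + (n:ℂ)‖ + ‖b‖ := by rw [norm_neg]
        rw [hnn] at h1; linarith
      have heq : (a + n) / (b + n) - 1 = (a - b) / (b + n) := by
        field_simp
        ring
      rw [heq, norm_div]
      gcongr
    · apply Tendsto.div_atTop (tendsto_const_nhds)
      apply tendsto_atTop_add_const_right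
      exact tendsto_natCast_atTop_atTop
  have := h0.add_const (1 : ℂ)
  simpa using this

lemma tendsto_succ_ratio : Tendsto (fun n : ℕ => ((n:ℝ)+2)/((n:ℝ)+1)) atTop (𝓝 1) := by
  have h := tendsto_const_nhds (x := (1:ℝ)) (f := atTop (α := ℕ)) |>.add
    tendsto_one_div_add_atTop_nhds_zero_nat
  rw [add_zero] at h
  apply h.congr
  intro n
  have hne : (n:ℝ) + 1 ≠ 0 := by positivity
  field_simp
  ring

lemma coeff_eq_zero {m : ℕ} (h : α/2 + (m:ℂ) = 0 ∨ β/2 + (m:ℂ) = 0) {n : ℕ} (hmn : m < n) :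
    heunCoeff α β γ n = 0 := by
  unfold heunCoeff
  rcases h with h | h
  · rw [Finset.prod_eq_zero (Finset.mem_range.2 hmn) h, zero_mul, zero_div]
  · rw [Finset.prod_eq_zero (f := fun i : ℕ => β/2 + (i:ℂ)) (Finset.mem_range.2 hmn) h,
      mul_zero, zero_div]

lemma sumAux (hγ : ∀ m : ℕ, γ ≠ -(m : ℂ)) (r : ℝ) (h0 : 0 ≤ r) (hr : r < 1) (k : ℕ) :
    Summable (fun n : ℕ => ((n:ℝ)+1)^k * ‖heunCoeff α β γ n‖ * r^(2*n)) := by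
  by_cases hdeg : ∃ m : ℕ, α/2 + (m:ℂ) = 0 ∨ β/2 + (m:ℂ) = 0
  · obtain ⟨m, hm⟩ := hdeg
    apply summable_of_ne_finset_zero (s := Finset.range (m+1))
    intro n hn
    rw [coeff_eq_zero hm (by simpa using Finset.mem_range.not.1 hn)]
    simp
  · push_neg at hdeg
    have hcne : ∀ n, heunCoeff α β γ n ≠ 0 := by
      intro n
      unfold heunCoeff
      apply div_ne_zero
      · exact mul_ne_zero (Finset.prod_ne_zero_iff.2 fun i _ => (hdeg i).1)
          (Finset.prod_ne_zero_iff.2 fun i _ => (hdeg i).2)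
      · exact mul_ne_zero (Nat.cast_ne_zero.2 n.factorial_ne_zero) (prod_den_ne hγ n)
    have hfpos : ∀ n, 0 < ‖heunCoeff α β γ n‖ := fun n => norm_pos_iff.2 (hcne n)
    have h2 : Tendsto (fun n : ℕ => heunCoeff α β γ (n+1) / heunCoeff α β γ n) atTop (𝓝 1) := by
      have h1 := (tendsto_cratio (α/2) 1).mul (tendsto_cratio (β/2) ((γ+1)/2))
      rw [one_mul] at h1
      apply h1.congr
      intro n
      rw [coeff_succ hγ n, mul_div_cancel_left₀ _ (hcne n),
        div_mul_div_comm (α/2 + (n:ℂ)) (1 + (n:ℂ)), add_comm (1:ℂ) (n:ℂ)]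
    have hT2 : Tendsto (fun n : ℕ => ‖heunCoeff α β γ (n+1)‖ / ‖heunCoeff α β γ n‖)
        atTop (𝓝 1) := by
      have h3 := h2.norm
      rw [norm_one] at h3
      exact h3.congr fun n => norm_div _ _
    set L := (1 + r^2)/2 with hL
    have hr2 : r^2 < 1 := by nlinarith
    have hL1 : L < 1 := by rw [hL]; linarith
    have hR : Tendsto (fun n : ℕ =>
        (((n:ℝ)+2)/((n:ℝ)+1))^k * (‖heunCoeff α β γ (n+1)‖/‖heunCoeff α β γ n‖) * r^2)
        atTop (𝓝 (1^k * 1 * r^2)) :=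
      ((tendsto_succ_ratio.pow k).mul hT2).mul tendsto_const_nhds
    have hev : ∀ᶠ n : ℕ in atTop, (((n:ℝ)+2)/((n:ℝ)+1))^k *
        (‖heunCoeff α β γ (n+1)‖/‖heunCoeff α β γ n‖) * r^2 ≤ L :=
      hR.eventually (eventually_le_nhds (by rw [one_pow, one_mul]; linarith))
    apply summable_of_ratio_norm_eventually_le hL1
    filter_upwards [hev] with n hn
    have hfn : (0:ℝ) ≤ ((n:ℝ)+1)^k * ‖heunCoeff α β γ n‖ * r^(2*n) := by positivity
    have hfn1 : (0:ℝ) ≤ (((n+1:ℕ):ℝ)+1)^k * ‖heunCoeff α β γ (n+1)‖ * r^(2*(n+1)) := by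
      positivity
    rw [Real.norm_of_nonneg hfn1, Real.norm_of_nonneg hfn]
    have hpow : r^(2*(n+1)) = r^(2*n) * r^2 := by
      rw [show 2*(n+1) = 2*n+2 from by ring, pow_add]
    have h1 : ((n:ℝ)+1) ≠ 0 := by positivity
    have h2' : ‖heunCoeff α β γ n‖ ≠ 0 := (hfpos n).ne'
    have e1 : (((n:ℝ)+2)/((n:ℝ)+1))^k * (((n:ℝ)+1)^k) = ((n:ℝ)+2)^k := by
      rw [div_pow, div_mul_cancel₀ _ (pow_ne_zero k h1)]
    have e2 : ‖heunCoeff α β γ (n+1)‖/‖heunCoeff α β γ n‖ * ‖heunCoeff α β γ n‖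
        = ‖heunCoeff α β γ (n+1)‖ := div_mul_cancel₀ _ h2'
    calc (((n+1:ℕ):ℝ)+1)^k * ‖heunCoeff α β γ (n+1)‖ * r^(2*(n+1))
        = ((((n:ℝ)+2)/((n:ℝ)+1))^k * (((n:ℝ)+1)^k))
            * (‖heunCoeff α β γ (n+1)‖/‖heunCoeff α β γ n‖ * ‖heunCoeff α β γ n‖)
            * (r^2 * r^(2*n)) := by
          rw [e1, e2, hpow]; push_cast; ring
      _ = ((((n:ℝ)+2)/((n:ℝ)+1))^k * (‖heunCoeff α β γ (n+1)‖/‖heunCoeff α β γ n‖) * r^2)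
            * (((n:ℝ)+1)^k * ‖heunCoeff α β γ n‖ * r^(2*n)) := by ring
      _ ≤ L * (((n:ℝ)+1)^k * ‖heunCoeff α β γ n‖ * r^(2*n)) :=
          mul_le_mul_of_nonneg_right hn hfn


noncomputable def F (α β γ : ℂ) (n : ℕ) (x : ℂ) : ℂ := heunCoeff α β γ n * x ^ (2*n)

noncomputable def G1 (α β γ : ℂ) (n : ℕ) (x : ℂ) : ℂ :=
  ((2*n : ℕ) : ℂ) * heunCoeff α β γ n * x ^ (2*n - 1)

noncomputable def G2 (α β γ : ℂ) (n : ℕ) (x : ℂ) : ℂ :=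
  ((2*n : ℕ) : ℂ) * ((2*n - 1 : ℕ) : ℂ) * heunCoeff α β γ n * x ^ (2*n - 2)

lemma hasDerivAt_F (n : ℕ) (x : ℂ) : HasDerivAt (F α β γ n) (G1 α β γ n x) x := by
  have h := (hasDerivAt_pow (2*n) x).const_mul (heunCoeff α β γ n)
  have e : G1 α β γ n x = heunCoeff α β γ n * (((2*n : ℕ):ℂ) * x ^ (2*n - 1)) := by
    unfold G1; ring
  rw [e]
  exact h

lemma hasDerivAt_G1 (n : ℕ) (x : ℂ) : HasDerivAt (G1 α β γ n) (G2 α β γ n x) x := by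
  have h := (hasDerivAt_pow (2*n - 1) x).const_mul (((2*n : ℕ):ℂ) * heunCoeff α β γ n)
  have e : G2 α β γ n x
      = ((2*n:ℕ):ℂ) * heunCoeff α β γ n * (((2*n - 1 : ℕ):ℂ) * x ^ (2*n - 1 - 1)) := by
    unfold G2
    rw [show 2*n - 1 - 1 = 2*n - 2 from by omega]
    ring
  rw [e]
  exact h

lemma summable_F0 : Summable (fun n => F α β γ n 0) := by
  apply summable_of_ne_finset_zero (s := {0})
  intro n hn
  have hn' : n ≠ 0 := by simpa using hn
  unfold F
  rw [zero_pow (by omega : 2*n ≠ 0), mul_zero]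

lemma summable_G10 : Summable (fun n => G1 α β γ n 0) := by
  apply summable_of_ne_finset_zero (s := {0})
  intro n hn
  have hn' : n ≠ 0 := by simpa using hn
  unfold G1
  rw [zero_pow (by omega : 2*n - 1 ≠ 0), mul_zero]

lemma norm_two_n (n : ℕ) : ‖((2*n : ℕ):ℂ)‖ = 2*(n:ℝ) := by
  rw [Complex.norm_natCast]; push_cast; ring

lemma norm_aff_le (ξ : ℂ) (n : ℕ) : ‖2*(n:ℂ) + ξ‖ ≤ (2 + ‖ξ‖) * ((n:ℝ)+1) := by
  calc ‖2*(n:ℂ)+ξ‖ ≤ ‖2*(n:ℂ)‖ + ‖ξ‖ := norm_add_le _ _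
    _ = 2*(n:ℝ) + ‖ξ‖ := by
        rw [norm_mul]
        norm_num
    _ ≤ (2+‖ξ‖)*((n:ℝ)+1) := by nlinarith [norm_nonneg ξ, Nat.cast_nonneg (α:=ℝ) n]

end HeunAux


set_option maxHeartbeats 2000000 in
open HeunAux Metric in
/-- The power series `Σ (α/2)_n (β/2)_n / (n! ((γ+1)/2)_n) z^{2n}` converges for `|z| < 1`
and satisfies the Heun equation with `a = -1`, `q = 0`, `δ = (α+β+1-γ)/2` on the
punctured unit disc. -/
theorem stmt6 (α β γ δ : ℂ) (hγ : ∀ m : ℕ, γ ≠ -(m : ℂ))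
    (hδ : δ = (α + β + 1 - γ) / 2) :
    (∀ z : ℂ, ‖z‖ < 1 → Summable (fun n : ℕ => heunCoeff α β γ n * z ^ (2 * n))) ∧
    (∀ z : ℂ, 0 < ‖z‖ → ‖z‖ < 1 →
      deriv (deriv (heunSeries α β γ)) z
        + (γ / z + δ / (z - 1) + δ / (z + 1)) * deriv (heunSeries α β γ) z
        + α * β / ((z - 1) * (z + 1)) * heunSeries α β γ z = 0) := by
  have key1 : ∀ z : ℂ, ‖z‖ < 1 → Summable (fun n : ℕ => heunCoeff α β γ n * z ^ (2 * n)) := by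
    intro z hz
    apply Summable.of_norm_bounded (sumAux hγ ‖z‖ (norm_nonneg z) hz 0)
    intro n
    rw [norm_mul, norm_pow, pow_zero, one_mul]
  refine ⟨key1, fun z hz0 hz1 => ?_⟩
  have hz_ne : z ≠ 0 := norm_pos_iff.1 hz0
  have hz1_ne : z - 1 ≠ 0 := by
    intro h
    rw [sub_eq_zero] at h
    rw [h] at hz1
    simp at hz1
  have hz2_ne : z + 1 ≠ 0 := by
    intro h
    have hzeq : z = -1 := by linear_combination h
    rw [hzeq] at hz1
    simp at hz1
  set r : ℝ := (‖z‖ + 1)/2 with hrdef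
  have hn0 : (0:ℝ) ≤ ‖z‖ := norm_nonneg z
  have hr0 : 0 < r := by rw [hrdef]; linarith
  have hzr : ‖z‖ < r := by rw [hrdef]; linarith
  have hr1 : r < 1 := by rw [hrdef]; linarith
  have hzball : z ∈ ball (0:ℂ) r := by rwa [mem_ball_zero_iff]
  have h0ball : (0:ℂ) ∈ ball (0:ℂ) r := by simpa [mem_ball] using hr0
  -- uniform bounds for G1 on the ball
  have bound1 : ∀ (n : ℕ) (x : ℂ), x ∈ ball (0:ℂ) r →
      ‖G1 α β γ n x‖ ≤ (2/r) * (((n:ℝ)+1)^1 * ‖heunCoeff α β γ n‖ * r^(2*n)) := by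
    intro n x hx
    have hxr : ‖x‖ ≤ r := (mem_ball_zero_iff.1 hx).le
    cases n with
    | zero =>
      simp only [G1, Nat.mul_zero, Nat.cast_zero, zero_mul, norm_zero]
      positivity
    | succ m =>
      have e1 : 2*(m+1) - 1 = 2*m+1 := by omega
      have key : (2/r) * ((((m:ℝ)+1)+1)^1 * ‖heunCoeff α β γ (m+1)‖ * r^(2*(m+1)))
          = 2*(((m:ℝ)+1)+1) * ‖heunCoeff α β γ (m+1)‖ * r^(2*m+1) := by
        have hp : r^(2*(m+1)) = r^(2*m+1) * r^1 := by
          rw [show 2*(m+1) = (2*m+1)+1 from by ring, pow_add]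
        rw [hp]
        field_simp [hr0.ne']
      calc ‖G1 α β γ (m+1) x‖
          = ‖((2*(m+1):ℕ):ℂ)‖ * ‖heunCoeff α β γ (m+1)‖ * ‖x‖^(2*m+1) := by
            rw [G1, e1, norm_mul, norm_mul, norm_pow]
        _ = (2*((m:ℝ)+1)) * ‖heunCoeff α β γ (m+1)‖ * ‖x‖^(2*m+1) := by
            rw [norm_two_n]; push_cast; ring
        _ ≤ (2*((m:ℝ)+1)) * ‖heunCoeff α β γ (m+1)‖ * r^(2*m+1) := by
            gcongr
        _ ≤ 2*(((m:ℝ)+1)+1) * ‖heunCoeff α β γ (m+1)‖ * r^(2*m+1) := by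
            have h1 : 2*((m:ℝ)+1) ≤ 2*(((m:ℝ)+1)+1) := by linarith
            exact mul_le_mul_of_nonneg_right
              (mul_le_mul_of_nonneg_right h1 (norm_nonneg _)) (pow_nonneg hr0.le _)
        _ = (2/r) * ((((m+1:ℕ):ℝ)+1)^1 * ‖heunCoeff α β γ (m+1)‖ * r^(2*(m+1))) := by
            push_cast
            rw [key]
  have bound2 : ∀ (n : ℕ) (x : ℂ), x ∈ ball (0:ℂ) r →
      ‖G2 α β γ n x‖ ≤ (4/(r*r)) * (((n:ℝ)+1)^2 * ‖heunCoeff α β γ n‖ * r^(2*n)) := by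
    intro n x hx
    have hxr : ‖x‖ ≤ r := (mem_ball_zero_iff.1 hx).le
    cases n with
    | zero =>
      simp only [G2, Nat.mul_zero, Nat.cast_zero, zero_mul, norm_zero]
      positivity
    | succ m =>
      have e1 : 2*(m+1) - 1 = 2*m+1 := by omega
      have e2 : 2*(m+1) - 2 = 2*m := by omega
      have key : (4/(r*r)) * ((((m:ℝ)+1)+1)^2 * ‖heunCoeff α β γ (m+1)‖ * r^(2*(m+1)))
          = 4*(((m:ℝ)+2))^2 * ‖heunCoeff α β γ (m+1)‖ * r^(2*m) := by
        have hp : r^(2*(m+1)) = r^(2*m) * r^2 := by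
          rw [show 2*(m+1) = (2*m)+2 from by ring, pow_add]
        rw [hp]
        field_simp [hr0.ne']
        ring
      calc ‖G2 α β γ (m+1) x‖
          = ‖((2*(m+1):ℕ):ℂ)‖ * ‖((2*m+1:ℕ):ℂ)‖ * ‖heunCoeff α β γ (m+1)‖ * ‖x‖^(2*m) := by
            rw [G2, e1, e2, norm_mul, norm_mul, norm_mul, norm_pow]
        _ = (2*((m:ℝ)+1)) * (2*(m:ℝ)+1) * ‖heunCoeff α β γ (m+1)‖ * ‖x‖^(2*m) := by
            rw [norm_two_n, Complex.norm_natCast]; push_cast; ring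
        _ ≤ (2*((m:ℝ)+1)) * (2*(m:ℝ)+1) * ‖heunCoeff α β γ (m+1)‖ * r^(2*m) := by
            have hm0 : (0:ℝ) ≤ (m:ℝ) := Nat.cast_nonneg m
            gcongr
        _ ≤ 4*(((m:ℝ)+2))^2 * ‖heunCoeff α β γ (m+1)‖ * r^(2*m) := by
            have hm0 : (0:ℝ) ≤ (m:ℝ) := Nat.cast_nonneg m
            have h1 : (2*((m:ℝ)+1)) * (2*(m:ℝ)+1) ≤ 4*(((m:ℝ)+2))^2 := by nlinarith
            exact mul_le_mul_of_nonneg_right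
              (mul_le_mul_of_nonneg_right h1 (norm_nonneg _)) (pow_nonneg hr0.le _)
        _ = (4/(r*r)) * ((((m+1:ℕ):ℝ)+1)^2 * ‖heunCoeff α β γ (m+1)‖ * r^(2*(m+1))) := by
            push_cast
            rw [key]
  have u1sum : Summable (fun n : ℕ => (2/r) * (((n:ℝ)+1)^1 * ‖heunCoeff α β γ n‖ * r^(2*n))) :=
    (sumAux hγ r hr0.le hr1 1).mul_left _
  have u2sum : Summable (fun n : ℕ => (4/(r*r)) * (((n:ℝ)+1)^2 * ‖heunCoeff α β γ n‖ * r^(2*n))) :=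
    (sumAux hγ r hr0.le hr1 2).mul_left _
  have D1 : ∀ x ∈ ball (0:ℂ) r,
      HasDerivAt (fun w => ∑' n, F α β γ n w) (∑' n, G1 α β γ n x) x :=
    fun x hx => hasDerivAt_tsum_of_isPreconnected u1sum isOpen_ball
      (convex_ball (0:ℂ) r).isPreconnected
      (fun n y _ => hasDerivAt_F n y) bound1 h0ball summable_F0 hx
  have D2 : ∀ x ∈ ball (0:ℂ) r,
      HasDerivAt (fun w => ∑' n, G1 α β γ n w) (∑' n, G2 α β γ n x) x :=
    fun x hx => hasDerivAt_tsum_of_isPreconnected u2sum isOpen_ball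
      (convex_ball (0:ℂ) r).isPreconnected
      (fun n y _ => hasDerivAt_G1 n y) bound2 h0ball summable_G10 hx
  have hYfun : heunSeries α β γ = fun w => ∑' n, F α β γ n w := rfl
  have hd1 : ∀ x ∈ ball (0:ℂ) r, deriv (heunSeries α β γ) x = ∑' n, G1 α β γ n x := by
    intro x hx
    rw [hYfun]
    exact (D1 x hx).deriv
  have hd2 : deriv (deriv (heunSeries α β γ)) z = ∑' n, G2 α β γ n z := by
    have hev : deriv (heunSeries α β γ) =ᶠ[nhds z] (fun w => ∑' n, G1 α β γ n w) := by
      filter_upwards [isOpen_ball.mem_nhds hzball] with x hx using hd1 x hx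
    rw [hev.deriv_eq]
    exact (D2 z hzball).deriv
  have hsF : Summable (fun n => F α β γ n z) := key1 z hz1
  have hsG1 : Summable (fun n => G1 α β γ n z) :=
    Summable.of_norm_bounded u1sum (fun n => bound1 n z hzball)
  have hsG2 : Summable (fun n => G2 α β γ n z) :=
    Summable.of_norm_bounded u2sum (fun n => bound2 n z hzball)
  -- summability of A and B
  have hsA : Summable (fun n : ℕ =>
      (2*(n:ℂ)+α) * (2*(n:ℂ)+β) * heunCoeff α β γ n * z^(2*n+1)) := by
    apply Summable.of_norm_bounded
      ((sumAux hγ ‖z‖ hn0 hz1 2).mul_left (‖z‖*((2+‖α‖)*(2+‖β‖))))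
    intro n
    calc ‖(2*(n:ℂ)+α) * (2*(n:ℂ)+β) * heunCoeff α β γ n * z^(2*n+1)‖
        = ‖2*(n:ℂ)+α‖ * ‖2*(n:ℂ)+β‖ * ‖heunCoeff α β γ n‖ * (‖z‖^(2*n) * ‖z‖) := by
          rw [norm_mul, norm_mul, norm_mul, norm_pow, pow_succ]
      _ ≤ ((2+‖α‖)*((n:ℝ)+1)) * ((2+‖β‖)*((n:ℝ)+1)) * ‖heunCoeff α β γ n‖
            * (‖z‖^(2*n) * ‖z‖) := by
          gcongr
          · exact norm_aff_le α n
          · exact norm_aff_le β n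
      _ = (‖z‖*((2+‖α‖)*(2+‖β‖))) * (((n:ℝ)+1)^2 * ‖heunCoeff α β γ n‖ * ‖z‖^(2*n)) := by
          ring
  have hsB : Summable (fun n : ℕ =>
      (2*(n:ℂ)) * (2*(n:ℂ)-1+γ) * heunCoeff α β γ n * z^(2*n-1)) := by
    apply Summable.of_norm_bounded
      ((sumAux hγ ‖z‖ hn0 hz1 2).mul_left ((2*(2+‖γ-1‖))/‖z‖))
    intro n
    cases n with
    | zero =>
      simp only [Nat.cast_zero, mul_zero, zero_mul, norm_zero]
      positivity
    | succ m =>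
      have e1 : 2*(m+1) - 1 = 2*m+1 := by omega
      have key : ((2*(2+‖γ-1‖))/‖z‖) * ((((m:ℝ)+1)+1)^2 * ‖heunCoeff α β γ (m+1)‖ * ‖z‖^(2*(m+1)))
          = 2*(2+‖γ-1‖) * (((m:ℝ)+2)^2 * ‖heunCoeff α β γ (m+1)‖ * ‖z‖^(2*m+1)) := by
        have hp : ‖z‖^(2*(m+1)) = ‖z‖^(2*m+1) * ‖z‖^1 := by
          rw [show 2*(m+1) = (2*m+1)+1 from by ring, pow_add]
        rw [hp, pow_one]
        have hc : 2*(2+‖γ-1‖)/‖z‖*‖z‖ = 2*(2+‖γ-1‖) := div_mul_cancel₀ _ hz0.ne'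
        linear_combination ((((m:ℝ)+1)+1)^2 * ‖heunCoeff α β γ (m+1)‖ * ‖z‖^(2*m+1)) * hc
      have e3 : (2*((m+1:ℕ):ℂ)) * (2*((m+1:ℕ):ℂ)-1+γ) * heunCoeff α β γ (m+1) * z^(2*(m+1)-1)
          = (2*((m:ℂ)+1)) * (2*((m:ℂ)+1) + (γ-1)) * heunCoeff α β γ (m+1) * z^(2*m+1) := by
        rw [e1]; push_cast; ring
      calc ‖(2*((m+1:ℕ):ℂ)) * (2*((m+1:ℕ):ℂ)-1+γ) * heunCoeff α β γ (m+1) * z^(2*(m+1)-1)‖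
          = ‖2*((m:ℂ)+1)‖ * ‖2*((m:ℂ)+1) + (γ-1)‖ * ‖heunCoeff α β γ (m+1)‖ * ‖z‖^(2*m+1) := by
            rw [e3, norm_mul, norm_mul, norm_mul, norm_pow]
        _ ≤ (2*((m:ℝ)+1)) * ((2+‖γ-1‖)*(((m:ℝ)+1)+1)) * ‖heunCoeff α β γ (m+1)‖
              * ‖z‖^(2*m+1) := by
            gcongr
            · rw [show (2*((m:ℂ)+1)) = ((2*(m+1):ℕ):ℂ) from by push_cast; ring, norm_two_n]
              push_cast
              exact le_refl _
            · rw [show (2*((m:ℂ)+1)) = 2*(((m+1:ℕ)):ℂ) from by push_cast; ring]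
              calc ‖2*(((m+1:ℕ)):ℂ) + (γ-1)‖ ≤ (2+‖γ-1‖)*(((m+1:ℕ):ℝ)+1) := norm_aff_le _ _
                _ = (2+‖γ-1‖)*(((m:ℝ)+1)+1) := by push_cast; ring
        _ ≤ (2*(((m:ℝ)+1)+1)) * ((2+‖γ-1‖)*(((m:ℝ)+1)+1)) * ‖heunCoeff α β γ (m+1)‖
              * ‖z‖^(2*m+1) := by
            have h1 : 2*((m:ℝ)+1) ≤ 2*(((m:ℝ)+1)+1) := by linarith
            have hm0 : (0:ℝ) ≤ (m:ℝ) := Nat.cast_nonneg m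
            gcongr
        _ = 2*(2+‖γ-1‖) * (((m:ℝ)+2)^2 * ‖heunCoeff α β γ (m+1)‖ * ‖z‖^(2*m+1)) := by ring
        _ = ((2*(2+‖γ-1‖))/‖z‖) * ((((m+1:ℕ):ℝ)+1)^2 * ‖heunCoeff α β γ (m+1)‖
              * ‖z‖^(2*(m+1))) := by
            push_cast
            rw [key]
  -- the termwise algebraic identity
  have termwise : ∀ n : ℕ,
      (z*(z-1)*(z+1)) * G2 α β γ n z
        + (γ*(z-1)*(z+1) + δ*z*(z+1) + δ*z*(z-1)) * G1 α β γ n z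
        + (α*β*z) * F α β γ n z
      = (2*(n:ℂ)+α) * (2*(n:ℂ)+β) * heunCoeff α β γ n * z^(2*n+1)
        - (2*(n:ℂ)) * (2*(n:ℂ)-1+γ) * heunCoeff α β γ n * z^(2*n-1) := by
    intro n
    cases n with
    | zero =>
      simp only [F, G1, G2, Nat.mul_zero, Nat.cast_zero, zero_mul, mul_zero, pow_zero]
      ring
    | succ m =>
      have e1 : 2*(m+1) - 1 = 2*m+1 := by omega
      have e2 : 2*(m+1) - 2 = 2*m := by omega
      have e3 : 2*(m+1) + 1 = 2*m+3 := by omega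
      have e4 : 2*(m+1) = 2*m+2 := by ring
      simp only [F, G1, G2, e1, e2, e3, e4]
      push_cast
      rw [hδ]
      ring
  have hBA : ∀ n : ℕ,
      (2*((n+1:ℕ):ℂ)) * (2*((n+1:ℕ):ℂ)-1+γ) * heunCoeff α β γ (n+1) * z^(2*(n+1)-1)
        = (2*(n:ℂ)+α) * (2*(n:ℂ)+β) * heunCoeff α β γ n * z^(2*n+1) := by
    intro n
    have e1 : 2*(n+1) - 1 = 2*n+1 := by omega
    rw [e1]
    push_cast
    linear_combination z^(2*n+1) * coeff_rec (α := α) (β := β) hγ n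
  -- rewrite the goal
  rw [hd2, hd1 z hzball, show heunSeries α β γ z = ∑' n, F α β γ n z from rfl]
  have hPw : (z*(z-1)*(z+1)) * (γ / z + δ / (z - 1) + δ / (z + 1))
      = γ*(z-1)*(z+1) + δ*z*(z+1) + δ*z*(z-1) := by
    field_simp
  have hQw : (z*(z-1)*(z+1)) * (α * β / ((z - 1) * (z + 1))) = α*β*z := by
    field_simp
  have hwne : z*(z-1)*(z+1) ≠ 0 := mul_ne_zero (mul_ne_zero hz_ne hz1_ne) hz2_ne
  have main : (z*(z-1)*(z+1)) * ((∑' n, G2 α β γ n z)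
      + (γ / z + δ / (z - 1) + δ / (z + 1)) * (∑' n, G1 α β γ n z)
      + α * β / ((z - 1) * (z + 1)) * (∑' n, F α β γ n z)) = 0 := by
    have expand : (z*(z-1)*(z+1)) * ((∑' n, G2 α β γ n z)
        + (γ / z + δ / (z - 1) + δ / (z + 1)) * (∑' n, G1 α β γ n z)
        + α * β / ((z - 1) * (z + 1)) * (∑' n, F α β γ n z))
        = (z*(z-1)*(z+1)) * (∑' n, G2 α β γ n z)
          + ((z*(z-1)*(z+1)) * (γ / z + δ / (z - 1) + δ / (z + 1))) * (∑' n, G1 α β γ n z)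
          + ((z*(z-1)*(z+1)) * (α * β / ((z - 1) * (z + 1)))) * (∑' n, F α β γ n z) := by
      ring
    rw [expand, hPw, hQw, ← tsum_mul_left, ← tsum_mul_left, ← tsum_mul_left,
      ← Summable.tsum_add (hsG2.mul_left _) (hsG1.mul_left _),
      ← Summable.tsum_add ((hsG2.mul_left _).add (hsG1.mul_left _)) (hsF.mul_left _)]
    rw [tsum_congr termwise, Summable.tsum_sub hsA hsB]
    have hshift : (∑' n : ℕ, (2*(n:ℂ)) * (2*(n:ℂ)-1+γ) * heunCoeff α β γ n * z^(2*n-1))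
        = ∑' n : ℕ, (2*(n:ℂ)+α) * (2*(n:ℂ)+β) * heunCoeff α β γ n * z^(2*n+1) := by
      rw [Summable.tsum_eq_zero_add hsB]
      simp only [Nat.cast_zero, mul_zero, zero_mul, zero_add]
      exact tsum_congr hBA
    rw [hshift, sub_self]
  rcases mul_eq_zero.mp main with h | h
  · exact absurd h hwne
  · exact h
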